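/- For every positive integer $d$, every $\tau > 0$, and every $s > 1/(2 + 1/\tau)$, the pair $(\tau, s)$ is not a John–Strömberg pair for the collection of all axis-parallel cubes in $\mathbb{R}^d$. That is, there exist a cube $Q$ and disjoint measurable subsets $E_+, E_-$ of $Q$ with $\min\{\lambda(E_+), \lambda(E_-)\} > \tau \lambda(Q \setminus E_+ \setminus E_-)$ such that no cube $W \subseteq Q$ satisfies $\min\{\lambda(E_+ \cap W), \lambda(E_- \cap W)\} \ge s \lambda(W)$. -/
import Mathlib


open MeasureTheory Set

/-- A closed axis-parallel cube in `ℝ^d` with positive side length. -/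
def IsCube {d : ℕ} (Q : Set (Fin d → ℝ)) : Prop :=
  ∃ (a : Fin d → ℝ) (l : ℝ), 0 < l ∧ Q = Set.univ.pi fun j => Set.Icc (a j) (a j + l)

/-- `(τ, s)` is a John–Strömberg pair for the collection of all cubes in `ℝ^d`. -/
def IsJSPair (d : ℕ) (τ s : ℝ) : Prop :=
  0 < τ ∧ 0 < s ∧
    ∀ Q : Set (Fin d → ℝ), IsCube Q →
      ∀ Ep Em : Set (Fin d → ℝ), MeasurableSet Ep → MeasurableSet Em →
        Ep ⊆ Q → Em ⊆ Q → Disjoint Ep Em →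
        min (volume Ep) (volume Em) > ENNReal.ofReal τ * volume ((Q \ Ep) \ Em) →
        ∃ W : Set (Fin d → ℝ), IsCube W ∧ W ⊆ Q ∧
          min (volume (Ep ∩ W)) (volume (Em ∩ W)) ≥ ENNReal.ofReal s * volume W

theorem stmt_3 (d : ℕ) (hd : 1 ≤ d) (τ s : ℝ) (hτ : 0 < τ)
    (hs : s > 1 / (2 + 1 / τ)) : ¬ IsJSPair d τ s := by
  obtain ⟨n, rfl⟩ : ∃ n, d = n + 1 := ⟨d - 1, (Nat.succ_pred_eq_of_pos hd).symm⟩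
  rintro ⟨-, hs0, H⟩
  -- the critical threshold
  have h2τ : (0:ℝ) < 2 * τ + 1 := by linarith
  have hthr : (1:ℝ) / (2 + 1 / τ) = τ / (2 * τ + 1) := by
    field_simp
  have hs₀s : τ / (2 * τ + 1) < s := by rw [← hthr]; exact hs
  have hs₀pos : (0:ℝ) < τ / (2 * τ + 1) := div_pos hτ h2τ
  have hs₀half : τ / (2 * τ + 1) < 1 / 2 := by
    rw [div_lt_div_iff₀ h2τ (by norm_num)]
    linarith
  -- choose the parameter a
  set a : ℝ := (τ / (2 * τ + 1) + min s (1 / 2)) / 2 with ha_def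
  have hbmin : τ / (2 * τ + 1) < min s (1 / 2) := lt_min hs₀s hs₀half
  have ha_lb : τ / (2 * τ + 1) < a := by rw [ha_def]; linarith
  have ha_s : a < s := by
    have : a < min s (1 / 2) := by rw [ha_def]; linarith
    exact lt_of_lt_of_le this (min_le_left _ _)
  have ha_half : a < 1 / 2 := by
    have : a < min s (1 / 2) := by rw [ha_def]; linarith
    exact lt_of_lt_of_le this (min_le_right _ _)
  have ha_pos : (0:ℝ) < a := lt_trans hs₀pos ha_lb
  have ha_key : τ * (1 - 2 * a) < a := by
    rw [div_lt_iff₀ h2τ] at ha_lb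
    nlinarith
  -- the sets
  set Q : Set (Fin (n + 1) → ℝ) := univ.pi fun _ => Icc (0:ℝ) 1 with hQ_def
  set Ep : Set (Fin (n + 1) → ℝ) :=
    univ.pi fun j => if j = 0 then Icc (0:ℝ) a else Icc 0 1 with hEp_def
  set Em : Set (Fin (n + 1) → ℝ) :=
    univ.pi fun j => if j = 0 then Icc (1 - a) 1 else Icc (0:ℝ) 1 with hEm_def
  have hQcube : IsCube Q := ⟨fun _ => 0, 1, one_pos, by simp [hQ_def]⟩
  have hEpMeas : MeasurableSet Ep :=
    MeasurableSet.univ_pi fun j => by split_ifs <;> exact measurableSet_Icc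
  have hEmMeas : MeasurableSet Em :=
    MeasurableSet.univ_pi fun j => by split_ifs <;> exact measurableSet_Icc
  have hEpQ : Ep ⊆ Q := pi_mono fun j _ => by
    split_ifs
    · exact Icc_subset_Icc le_rfl (by linarith)
    · exact subset_rfl
  have hEmQ : Em ⊆ Q := pi_mono fun j _ => by
    split_ifs
    · exact Icc_subset_Icc (by linarith) le_rfl
    · exact subset_rfl
  have hdisj : Disjoint Ep Em := by
    rw [Set.disjoint_left]
    intro x hxp hxm
    have h1 := hxp 0 (mem_univ _)
    have h2 := hxm 0 (mem_univ _)
    simp only [if_pos rfl, mem_Icc] at h1 h2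
    linarith [h1.2, h2.1]
  -- volumes
  have vol_slab : ∀ I : Set ℝ,
      volume (univ.pi fun j : Fin (n + 1) => if j = 0 then I else Icc (0:ℝ) 1)
        = volume I := by
    intro I
    rw [volume_pi_pi, Fin.prod_univ_succ]
    simp [Fin.succ_ne_zero, Real.volume_Icc]
  have hvolQ : volume Q = 1 := by
    rw [hQ_def, volume_pi_pi]
    simp [Real.volume_Icc]
  have hvolEp : volume Ep = ENNReal.ofReal a := by
    rw [hEp_def, vol_slab, Real.volume_Icc, sub_zero]
  have hvolEm : volume Em = ENNReal.ofReal a := by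
    rw [hEm_def, vol_slab, Real.volume_Icc]
    norm_num
  have hEmQEp : Em ⊆ Q \ Ep := subset_diff.mpr ⟨hEmQ, hdisj.symm⟩
  have hvolGap : volume ((Q \ Ep) \ Em) = ENNReal.ofReal (1 - 2 * a) := by
    rw [measure_diff hEmQEp hEmMeas.nullMeasurableSet (by rw [hvolEm]; exact ENNReal.ofReal_ne_top),
      measure_diff hEpQ hEpMeas.nullMeasurableSet (by rw [hvolEp]; exact ENNReal.ofReal_ne_top),
      hvolQ, hvolEp, hvolEm, ← ENNReal.ofReal_one,
      ← ENNReal.ofReal_sub _ ha_pos.le, ← ENNReal.ofReal_sub _ ha_pos.le]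
    norm_num
    ring_nf
  -- apply the hypothesis
  obtain ⟨W, ⟨c, l, hl, rfl⟩, hWQ, hmin⟩ :=
    H Q hQcube Ep Em hEpMeas hEmMeas hEpQ hEmQ hdisj (by
      rw [hvolEp, hvolEm, hvolGap, min_self, ← ENNReal.ofReal_mul hτ.le]
      exact ENNReal.ofReal_lt_ofReal_iff ha_pos |>.mpr ha_key)
  -- componentwise bounds for W
  have hcomp : ∀ j, 0 ≤ c j ∧ c j + l ≤ 1 := by
    intro j
    have hmem : ∀ t ∈ Icc (c j) (c j + l), (0:ℝ) ≤ t ∧ t ≤ 1 := by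
      intro t ht
      have hx : Function.update c j t ∈ Q := by
        apply hWQ
        intro k _
        rcases eq_or_ne k j with rfl | hk
        · simpa using ht
        · rw [Function.update_of_ne hk]
          exact ⟨le_rfl, by linarith⟩
      have := hx j (mem_univ _)
      simpa [hQ_def] using this
    have h1 := hmem (c j) ⟨le_rfl, by linarith⟩
    have h2 := hmem (c j + l) ⟨by linarith, le_rfl⟩
    exact ⟨h1.1, h2.2⟩
  have hc0 : 0 ≤ c 0 := (hcomp 0).1
  have hcl : c 0 + l ≤ 1 := (hcomp 0).2
  have hl1 : l ≤ 1 := by linarith [hc0, hcl]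
  have hsub : ∀ k, Icc (c k) (c k + l) ⊆ Icc (0:ℝ) 1 :=
    fun k => Icc_subset_Icc (hcomp k).1 (hcomp k).2
  -- intersection volumes
  set p : ℝ := min a (c 0 + l) - c 0 with hp_def
  set m : ℝ := c 0 + l - max (1 - a) (c 0) with hm_def
  set W : Set (Fin (n + 1) → ℝ) := univ.pi fun k => Icc (c k) (c k + l) with hW_def
  have hvolW : volume W = ENNReal.ofReal l ^ (n + 1) := by
    rw [hW_def, volume_pi_pi]
    simp [Real.volume_Icc]
  have succ_fact : ∀ (I : Set ℝ) (j : Fin n),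
      (if (j.succ : Fin (n+1)) = 0 then I else Icc (0:ℝ) 1) ∩ Icc (c j.succ) (c j.succ + l)
        = Icc (c j.succ) (c j.succ + l) := by
    intro I j
    rw [if_neg (Fin.succ_ne_zero j)]
    exact inter_eq_self_of_subset_right (hsub _)
  have hvolEpW : volume (Ep ∩ W) = ENNReal.ofReal p * ENNReal.ofReal l ^ n := by
    rw [hEp_def, hW_def, ← pi_inter_distrib, volume_pi_pi, Fin.prod_univ_succ]
    have h0 : (if (0 : Fin (n+1)) = 0 then Icc (0:ℝ) a else Icc 0 1) ∩ Icc (c 0) (c 0 + l)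
        = Icc (c 0) (min a (c 0 + l)) := by
      rw [if_pos rfl, Icc_inter_Icc, max_eq_right hc0]
    rw [h0]
    simp only [succ_fact]
    simp [Real.volume_Icc, hp_def]
  have hvolEmW : volume (Em ∩ W) = ENNReal.ofReal m * ENNReal.ofReal l ^ n := by
    rw [hEm_def, hW_def, ← pi_inter_distrib, volume_pi_pi, Fin.prod_univ_succ]
    have h0 : (if (0 : Fin (n+1)) = 0 then Icc (1 - a) 1 else Icc (0:ℝ) 1) ∩ Icc (c 0) (c 0 + l)
        = Icc (max (1 - a) (c 0)) (c 0 + l) := by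
      rw [if_pos rfl, Icc_inter_Icc, min_eq_right hcl]
    rw [h0]
    simp only [succ_fact]
    simp [Real.volume_Icc, hm_def]
  -- key real inequality
  have hsl : (0:ℝ) < s * l := mul_pos hs0 hl
  have hkey : min p m < s * l := by
    rcases le_or_gt p 0 with hp' | hp'
    · exact lt_of_le_of_lt (le_trans (min_le_left _ _) hp') hsl
    rcases le_or_gt m 0 with hm' | hm'
    · exact lt_of_le_of_lt (le_trans (min_le_right _ _) hm') hsl
    have h1 : p ≤ a - c 0 := by
      rw [hp_def]
      have := min_le_left a (c 0 + l)
      linarith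
    have h2 : m ≤ c 0 + l - (1 - a) := by
      rw [hm_def]
      have := le_max_left (1 - a) (c 0)
      linarith
    have hmin2 : 2 * min p m ≤ p + m := by
      rcases le_total p m with h | h
      · rw [min_eq_left h]; linarith
      · rw [min_eq_right h]; linarith
    nlinarith [mul_lt_mul_of_pos_right ha_s hl, mul_nonneg (by linarith : (0:ℝ) ≤ 1 - 2 * a) (by linarith : (0:ℝ) ≤ 1 - l)]
  -- derive the contradiction
  rw [hvolEpW, hvolEmW, hvolW] at hmin
  set L : ENNReal := ENNReal.ofReal l ^ n with hL_def
  have hL0 : L ≠ 0 := pow_ne_zero _ (ENNReal.ofReal_pos.mpr hl).ne'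
  have hLtop : L ≠ ⊤ := ENNReal.pow_ne_top ENNReal.ofReal_ne_top
  have hminL : min (ENNReal.ofReal p * L) (ENNReal.ofReal m * L)
      = ENNReal.ofReal (min p m) * L := by
    rcases le_total p m with h | h
    · rw [min_eq_left (mul_le_mul_left (ENNReal.ofReal_le_ofReal h) L), min_eq_left h]
    · rw [min_eq_right (mul_le_mul_left (ENNReal.ofReal_le_ofReal h) L), min_eq_right h]
  have hRHS : ENNReal.ofReal s * ENNReal.ofReal l ^ (n + 1) = ENNReal.ofReal (s * l) * L := by
    rw [pow_succ, ENNReal.ofReal_mul hs0.le, hL_def]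
    ring
  rw [hminL, hRHS] at hmin
  have hle : ENNReal.ofReal (s * l) ≤ ENNReal.ofReal (min p m) :=
    (ENNReal.mul_le_mul_iff_left hL0 hLtop).mp hmin
  have hlt : ENNReal.ofReal (min p m) < ENNReal.ofReal (s * l) :=
    (ENNReal.ofReal_lt_ofReal_iff hsl).mpr hkey
  exact absurd hle (not_le_of_gt hlt)
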